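/- Let $H \subseteq L_2$ be a set of real-valued random variables, $\kappa, \delta \in (0,1]$, and suppose $H$ satisfies the small ball property: $\mathbb{P}[h^2 \geq \kappa^2 \mathbb{E}[h^2]] \geq \delta$ for all $h \in H$. Then there exist absolute constants $s_1, s_2 > 0$ such that for every $m \geq 1$, every $h \in H$, and independent copies $h_1,\dots,h_m$ of $h$: with probability at least $1 - 2\exp(-s_2 \delta m)$, for all $J \subseteq \{1,\dots,m\}$ with $|J| \leq s_1 \delta m$, one has $\frac{1}{m}\sum_{i \in \{1,\dots,m\}\setminus J} h_i^2 \geq \frac{\delta \kappa^2}{2}\, \mathbb{E}[h^2]$. -/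

import Mathlib

open MeasureTheory ProbabilityTheory

/-- The small ball property implies a stable lower bound: there are absolute
constants `s₁, s₂ > 0` such that for any class `H ⊆ L₂` satisfying
`ℙ[h² ≥ κ² E[h²]] ≥ δ` for all `h ∈ H`, for every `m`, `h ∈ H` and i.i.d. copies
`h₁,…,h_m` of `h`, with probability at least `1 - 2 exp(-s₂ δ m)`, for every
`J ⊆ {1,…,m}` with `|J| ≤ s₁ δ m` one has
`(1/m) ∑_{i ∉ J} h_i² ≥ (δκ²/2) E[h²]`. -/
theorem small_ball_implies_stable_lower_bound :
    ∃ s₁ s₂ : ℝ, 0 < s₁ ∧ 0 < s₂ ∧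
      ∀ {Ω : Type} [MeasurableSpace Ω] (μ : Measure Ω) [IsProbabilityMeasure μ]
        (H : Set (Ω → ℝ)) (κ δ : ℝ), κ ∈ Set.Ioc (0 : ℝ) 1 → δ ∈ Set.Ioc (0 : ℝ) 1 →
        (∀ h ∈ H, Measurable h) → (∀ h ∈ H, MemLp h 2 μ) →
        (∀ h ∈ H, δ ≤ (μ {ω | κ ^ 2 * (∫ ω', h ω' ^ 2 ∂μ) ≤ h ω ^ 2}).toReal) →
        ∀ (m : ℕ), 0 < m → ∀ h ∈ H,
        ∀ {Ω' : Type} [MeasurableSpace Ω'] (ν : Measure Ω') [IsProbabilityMeasure ν]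
          (h' : Fin m → Ω' → ℝ),
        (∀ i, Measurable (h' i)) →
        iIndepFun h' ν →
        (∀ i, ν.map (h' i) = μ.map h) →
        1 - 2 * Real.exp (-s₂ * δ * m) ≤
          (ν {ω | ∀ J : Finset (Fin m), (J.card : ℝ) ≤ s₁ * δ * m →
            δ * κ ^ 2 / 2 * (∫ ω', h ω' ^ 2 ∂μ)
              ≤ (m : ℝ)⁻¹ * ∑ i ∈ Finset.univ \ J, h' i ω ^ 2}).toReal := by
  refine ⟨1/100, 1/10, by norm_num, by norm_num, ?_⟩
  intro Ω _ μ _ H κ δ hκ hδ hHmeas _hHL2 hsb m hm h hH Ω' _ ν _ h' hm' hindep hmap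
  have hm0 : (0 : ℝ) < m := by exact_mod_cast hm
  set E2 : ℝ := ∫ ω', h ω' ^ 2 ∂μ with hE2def
  have hE2 : 0 ≤ E2 := integral_nonneg fun ω => sq_nonneg _
  -- the "good value" set on ℝ
  set A : Set ℝ := {x | κ ^ 2 * E2 ≤ x ^ 2} with hAdef
  have hA : MeasurableSet A :=
    measurableSet_le measurable_const (measurable_id.pow_const 2)
  set B : Fin m → Set Ω' := fun i => h' i ⁻¹' A with hBdef
  have hB : ∀ i, MeasurableSet (B i) := fun i => (hm' i) hA
  -- indicator random variables
  set X : Fin m → Ω' → ℝ := fun i => (B i).indicator 1 with hXdef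
  have hXmeas : ∀ i, Measurable (X i) := fun i => measurable_one.indicator (hB i)
  have hXindep : iIndepFun X ν := by
    have hcomp := hindep.comp (g := fun _ => A.indicator (1 : ℝ → ℝ))
      (fun _ => measurable_one.indicator hA)
    have hfe : (fun i => A.indicator (1 : ℝ → ℝ) ∘ h' i) = X := by
      funext i ω
      by_cases hω : h' i ω ∈ A <;>
        simp [X, B, Set.indicator, hω, Function.comp]
    rwa [hfe] at hcomp
  have hX01 : ∀ i ω, X i ω = 0 ∨ X i ω = 1 := by
    intro i ω
    by_cases hω : ω ∈ B i <;> simp [X, Set.indicator, hω]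
  -- the probability of the good event for each coordinate
  have hp : ∀ i, δ ≤ (ν (B i)).toReal := by
    intro i
    have h1 : ν (B i) = μ (h ⁻¹' A) := by
      rw [← Measure.map_apply (hm' i) hA, hmap i, Measure.map_apply (hHmeas h hH) hA]
    have h2 : h ⁻¹' A = {ω | κ ^ 2 * E2 ≤ h ω ^ 2} := rfl
    rw [h1, h2]
    exact hsb h hH
  -- mgf computation at t = -log 2
  set t : ℝ := -Real.log 2 with htdef
  have ht : t ≤ 0 := neg_nonpos.mpr (Real.log_nonneg one_le_two)
  have hexpt : Real.exp t = 2⁻¹ := by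
    rw [htdef, Real.exp_neg, Real.exp_log two_pos]
  have heq : ∀ i, (fun ω => Real.exp (t * X i ω))
      = fun ω => 1 + (Real.exp t - 1) * (B i).indicator 1 ω := by
    intro i
    funext ω
    by_cases hω : ω ∈ B i <;> simp [X, Set.indicator, hω]
  have hint : ∀ i, Integrable (fun ω => Real.exp (t * X i ω)) ν := by
    intro i
    rw [heq i]
    exact (integrable_const 1).add (((integrable_const (1:ℝ)).indicator (hB i)).const_mul _)
  have hmgf : ∀ i, mgf (X i) ν t = 1 + (Real.exp t - 1) * (ν (B i)).toReal := by
    intro i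
    have h1 : Integrable ((B i).indicator (1 : Ω' → ℝ)) ν :=
      (integrable_const 1).indicator (hB i)
    rw [mgf, heq i, integral_add (integrable_const 1) (h1.const_mul _),
      integral_const, integral_const_mul, integral_indicator_one (hB i)]
    simp [Measure.real]
  have hmgf_le : ∀ i, mgf (X i) ν t ≤ Real.exp (-(δ/2)) := by
    intro i
    rw [hmgf i, hexpt]
    have h1 : 1 + (2⁻¹ - 1) * (ν (B i)).toReal ≤ 1 - δ/2 := by
      have := hp i; nlinarith
    have h2 : 1 - δ/2 ≤ Real.exp (-(δ/2)) := by
      have := Real.add_one_le_exp (-(δ/2)); linarith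
    linarith
  -- Chernoff bound
  set a : ℝ := δ * m / 2 + (1/100) * δ * m with hadef
  have hδm : 0 ≤ δ * m := mul_nonneg hδ.1.le hm0.le
  have hint_sum : Integrable (fun ω => Real.exp (t * (∑ i, X i) ω)) ν :=
    hXindep.integrable_exp_mul_sum hXmeas (fun i _ => hint i)
  have hcher : (ν {ω | (∑ i, X i) ω ≤ a}).toReal
      ≤ Real.exp (-t * a) * mgf (∑ i, X i) ν t :=
    measure_le_le_exp_mul_mgf a ht hint_sum
  have hprod : mgf (∑ i, X i) ν t ≤ Real.exp (-(δ/2)) ^ m := by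
    rw [hXindep.mgf_sum hXmeas Finset.univ]
    calc ∏ i, mgf (X i) ν t ≤ ∏ _i : Fin m, Real.exp (-(δ/2)) :=
          Finset.prod_le_prod (fun i _ => mgf_nonneg) (fun i _ => hmgf_le i)
      _ = Real.exp (-(δ/2)) ^ m := by simp
  have hfinal : Real.exp (-t * a) * Real.exp (-(δ/2)) ^ m
      ≤ Real.exp (-(1/10) * δ * m) := by
    rw [← Real.exp_nat_mul, ← Real.exp_add, Real.exp_le_exp]
    have hlog : Real.log 2 < 0.6931471808 := Real.log_two_lt_d9
    have h0 : (0:ℝ) ≤ Real.log 2 := Real.log_nonneg one_le_two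
    rw [htdef, hadef]
    nlinarith [hδm]
  have hbad : (ν {ω | (∑ i, X i) ω ≤ a}).toReal ≤ Real.exp (-(1/10) * δ * m) := by
    calc (ν {ω | (∑ i, X i) ω ≤ a}).toReal
        ≤ Real.exp (-t * a) * mgf (∑ i, X i) ν t := hcher
      _ ≤ Real.exp (-t * a) * Real.exp (-(δ/2)) ^ m := by
          exact mul_le_mul_of_nonneg_left hprod (Real.exp_pos _).le
      _ ≤ Real.exp (-(1/10) * δ * m) := hfinal
  -- event inclusion
  set Bad : Set Ω' := {ω | (∑ i, X i) ω ≤ a} with hBaddef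
  have hNmeas : Measurable (∑ i, X i) := by
    rw [show (∑ i, X i) = fun ω => ∑ i, X i ω from funext fun ω => by
      simp [Finset.sum_apply]]
    exact Finset.measurable_sum _ fun i _ => hXmeas i
  have hBadmeas : MeasurableSet Bad := measurableSet_le hNmeas measurable_const
  set G : Set Ω' := {ω | ∀ J : Finset (Fin m), (J.card : ℝ) ≤ 1/100 * δ * m →
      δ * κ ^ 2 / 2 * E2 ≤ (m : ℝ)⁻¹ * ∑ i ∈ Finset.univ \ J, h' i ω ^ 2} with hGdef
  have hsub : Badᶜ ⊆ G := by
    intro ω hω J hJ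
    have hN : a < ∑ i, X i ω := by
      have : ¬ (∑ i, X i) ω ≤ a := hω
      push_neg at this
      simpa using this
    have hsplit : ∑ i ∈ Finset.univ \ J, X i ω + ∑ i ∈ J, X i ω = ∑ i, X i ω :=
      Finset.sum_sdiff (Finset.subset_univ J)
    have hJsum : ∑ i ∈ J, X i ω ≤ (J.card : ℝ) := by
      calc ∑ i ∈ J, X i ω ≤ ∑ _i ∈ J, (1:ℝ) :=
            Finset.sum_le_sum fun i _ => by rcases hX01 i ω with h0 | h0 <;> simp [h0]
        _ = (J.card : ℝ) := by simp
    have hkey : δ * m / 2 ≤ ∑ i ∈ Finset.univ \ J, X i ω := by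
      rw [hadef] at hN; linarith
    have hterm : ∀ i ∈ Finset.univ \ J, κ ^ 2 * E2 * X i ω ≤ h' i ω ^ 2 := by
      intro i _
      by_cases hωi : ω ∈ B i
      · have : κ ^ 2 * E2 ≤ h' i ω ^ 2 := hωi
        simp [X, Set.indicator, hωi, this]
      · simp [X, Set.indicator, hωi, sq_nonneg]
    have hsum2 : κ ^ 2 * E2 * (δ * m / 2) ≤ ∑ i ∈ Finset.univ \ J, h' i ω ^ 2 := by
      calc κ ^ 2 * E2 * (δ * m / 2) ≤ κ ^ 2 * E2 * ∑ i ∈ Finset.univ \ J, X i ω := by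
            exact mul_le_mul_of_nonneg_left hkey (by positivity)
        _ = ∑ i ∈ Finset.univ \ J, κ ^ 2 * E2 * X i ω := by rw [Finset.mul_sum]
        _ ≤ ∑ i ∈ Finset.univ \ J, h' i ω ^ 2 := Finset.sum_le_sum hterm
    have hminv : (0:ℝ) < (m:ℝ)⁻¹ := by positivity
    calc δ * κ ^ 2 / 2 * E2 = (m:ℝ)⁻¹ * (κ ^ 2 * E2 * (δ * m / 2)) := by
          field_simp
      _ ≤ (m:ℝ)⁻¹ * ∑ i ∈ Finset.univ \ J, h' i ω ^ 2 :=
          mul_le_mul_of_nonneg_left hsum2 hminv.le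
  have hcompl : (ν Badᶜ).toReal = 1 - (ν Bad).toReal := by
    rw [prob_compl_eq_one_sub hBadmeas,
      ENNReal.toReal_sub_of_le prob_le_one ENNReal.one_ne_top, ENNReal.toReal_one]
  have hmono : (ν Badᶜ).toReal ≤ (ν G).toReal :=
    (ENNReal.toReal_le_toReal (measure_ne_top _ _) (measure_ne_top _ _)).mpr
      (measure_mono hsub)
  have hexple : Real.exp (-(1/10) * δ * m) ≤ 2 * Real.exp (-(1/10) * δ * m) := by
    nlinarith [Real.exp_pos (-(1/10) * δ * m)]
  calc 1 - 2 * Real.exp (-(1/10) * δ * m) ≤ 1 - (ν Bad).toReal := by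
        have : (ν Bad).toReal ≤ 2 * Real.exp (-(1/10) * δ * m) := le_trans hbad hexple
        linarith
    _ = (ν Badᶜ).toReal := hcompl.symm
    _ ≤ (ν G).toReal := hmono
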